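/- Let f : E → F be a smooth map between Banach spaces of the form f(x) = f(0) + D·x + N(x), where D : E → F is a bounded linear operator admitting a bounded right inverse G : F → E (so D ∘ G = Id_F), and the nonlinear part satisfies ‖G(N(x)) − G(N(y))‖ ≤ C(‖x‖ + ‖y‖)·‖x − y‖ for all x, y in the ball B_ε(0), where ε ≤ 1/(4C). If ‖G(f(0))‖ ≤ ε/2, then there exists a unique x₀ ∈ B_ε(0) ∩ G(F) with f(x₀) = 0, and it satisfies ‖x₀‖ ≤ ε. -/

import Mathlib

open Metric

/-- Contraction-principle solution of `f(x) = 0` near `0` for a map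
`f(x) = f(0) + D x + N(x)` with right-inverted linear part. -/
theorem stmt_1 {E F : Type*} [NormedAddCommGroup E] [NormedSpace ℝ E] [CompleteSpace E]
    [NormedAddCommGroup F] [NormedSpace ℝ F] [CompleteSpace F]
    (f : E → F) (hf : Continuous f)
    (D : E →L[ℝ] F) (G : F →L[ℝ] E) (hDG : ∀ y, D (G y) = y)
    (N : E → F) (hN : ∀ x, N x = f x - f 0 - D x)
    (C ε : ℝ) (hC : 0 < C) (hε : 0 < ε) (hεC : ε ≤ 1 / (4 * C))
    (hcontr : ∀ x ∈ closedBall (0 : E) ε, ∀ y ∈ closedBall (0 : E) ε,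
      ‖G (N x) - G (N y)‖ ≤ C * (‖x‖ + ‖y‖) * ‖x - y‖)
    (hinit : ‖G (f 0)‖ ≤ ε / 2) :
    ∃! x₀ : E, (x₀ ∈ closedBall (0 : E) ε ∩ Set.range G ∧ f x₀ = 0) ∧ ‖x₀‖ ≤ ε := by
  classical
  set T : E → E := fun x => -(G (f 0)) - G (N x) with hT
  have hN0 : N 0 = 0 := by simp [hN]
  have hCε : C * ε ≤ 1 / 4 := by
    have h4 : (0:ℝ) < 4 * C := by linarith
    rw [le_div_iff₀ h4] at hεC
    nlinarith
  have h0mem : (0:E) ∈ closedBall (0:E) ε := mem_closedBall_self hε.le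
  have hGNbound : ∀ x ∈ closedBall (0:E) ε, ‖G (N x)‖ ≤ ε / 4 := by
    intro x hx
    have h := hcontr x hx 0 h0mem
    simp only [hN0, map_zero, sub_zero, norm_zero, add_zero] at h
    have hxn : ‖x‖ ≤ ε := mem_closedBall_zero_iff.mp hx
    nlinarith [norm_nonneg x,
      mul_nonneg (mul_nonneg hC.le (sub_nonneg.mpr hxn)) (add_nonneg hε.le (norm_nonneg x)),
      mul_nonneg (sub_nonneg.mpr hCε) hε.le]
  have hmaps : ∀ x ∈ closedBall (0:E) ε, T x ∈ closedBall (0:E) ε := by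
    intro x hx
    rw [mem_closedBall_zero_iff]
    calc ‖T x‖ = ‖-(G (f 0)) - G (N x)‖ := rfl
      _ ≤ ‖-(G (f 0))‖ + ‖G (N x)‖ := norm_sub_le _ _
      _ = ‖G (f 0)‖ + ‖G (N x)‖ := by rw [norm_neg]
      _ ≤ ε / 2 + ε / 4 := add_le_add hinit (hGNbound x hx)
      _ ≤ ε := by linarith
  have hlip : ∀ x ∈ closedBall (0:E) ε, ∀ y ∈ closedBall (0:E) ε,
      dist (T x) (T y) ≤ (1/2 : ℝ) * dist x y := by
    intro x hx y hy
    have h := hcontr y hy x hx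
    have hxn : ‖x‖ ≤ ε := mem_closedBall_zero_iff.mp hx
    have hyn : ‖y‖ ≤ ε := mem_closedBall_zero_iff.mp hy
    have hTxy : T x - T y = G (N y) - G (N x) := by simp only [hT]; abel
    rw [dist_eq_norm, hTxy, dist_eq_norm]
    have hnn : ‖y - x‖ = ‖x - y‖ := norm_sub_rev _ _
    rw [hnn] at h
    nlinarith [norm_nonneg (x - y),
      mul_nonneg (mul_nonneg hC.le (sub_nonneg.mpr hxn)) (norm_nonneg (x - y)),
      mul_nonneg (mul_nonneg hC.le (sub_nonneg.mpr hyn)) (norm_nonneg (x - y)),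
      mul_nonneg (sub_nonneg.mpr hCε) (norm_nonneg (x - y))]
  -- the fixed point on the closed ball
  haveI : CompleteSpace (closedBall (0:E) ε) := isClosed_closedBall.completeSpace_coe
  haveI : Nonempty (closedBall (0:E) ε) := ⟨⟨0, h0mem⟩⟩
  let T' : closedBall (0:E) ε → closedBall (0:E) ε := fun x => ⟨T x, hmaps x x.2⟩
  have hcon : ContractingWith (1/2 : NNReal) T' := by
    constructor
    · exact NNReal.half_lt_self one_ne_zero
    · apply LipschitzWith.of_dist_le_mul
      intro x y
      have h := hlip x x.2 y y.2
      simpa [Subtype.dist_eq] using h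
  set x₀S : closedBall (0:E) ε := ContractingWith.fixedPoint T' hcon with hx₀S
  have hfixS : T' x₀S = x₀S := hcon.fixedPoint_isFixedPt
  set x₀ : E := (x₀S : E) with hx₀
  have hfixE : T x₀ = x₀ := congrArg Subtype.val hfixS
  have hx₀mem : x₀ ∈ closedBall (0:E) ε := x₀S.2
  -- x₀ is in the range of G
  have hrange : x₀ ∈ Set.range G := by
    refine ⟨-(f 0) - N x₀, ?_⟩
    rw [map_sub, map_neg]
    exact hfixE
  -- f x₀ = 0
  have hDx : D x₀ = -(f 0) - N x₀ := by
    conv_lhs => rw [← hfixE]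
    simp [hT, map_sub, map_neg, hDG]
  have hfx₀ : f x₀ = 0 := by
    have h2 : f x₀ = N x₀ + f 0 + D x₀ := by rw [hN x₀]; abel
    rw [h2, hDx]; abel
  -- characterization: any zero in the ball ∩ range G is a fixed point of T
  have key : ∀ x, x ∈ closedBall (0:E) ε → x ∈ Set.range G → f x = 0 → T x = x := by
    rintro x hx ⟨y, rfl⟩ hfxz
    have h2 : f (G y) = N (G y) + f 0 + D (G y) := by rw [hN (G y)]; abel
    have h3 : G (N (G y)) + G (f 0) + G y = 0 := by
      have := congrArg G hfxz
      rw [h2, map_zero, map_add, map_add, hDG] at this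
      exact this
    have h5 : T (G y) - G y = 0 := by
      have h4 : T (G y) - G y = -(G (N (G y)) + G (f 0) + G y) := by
        simp only [hT]; abel
      rw [h4, h3, neg_zero]
    exact sub_eq_zero.mp h5
  refine ⟨x₀, ⟨⟨⟨hx₀mem, hrange⟩, hfx₀⟩, mem_closedBall_zero_iff.mp hx₀mem⟩, ?_⟩
  rintro x ⟨⟨⟨hxball, hxrange⟩, hxf⟩, -⟩
  have hTx := key x hxball hxrange hxf
  have hd := hlip x hxball x₀ hx₀mem
  rw [hTx, hfixE] at hd
  have hd0 : dist x x₀ = 0 := by nlinarith [dist_nonneg (x := x) (y := x₀)]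
  exact eq_of_dist_eq_zero hd0
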